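/- Let G be an infinite non-abelian 2-group (every element has order a power of 2) with a unique element of order 2, and let F = {x ∈ G : orderOf x = 4}. Let A be a maximal abelian subgroup of G with more than 4 elements, and let b ∈ F with b ∉ A. Then F \ A = b·A, i.e. the set of order-4 elements outside A coincides with the left coset {b·a : a ∈ A}. -/

import Mathlib

set_option linter.unusedSectionVars false

open Pointwise

namespace Stmt8Aux

variable {G : Type*} [Group G]

lemma ord2pow (hG : IsPGroup 2 G) (g : G) : ∃ n : ℕ, orderOf g = 2 ^ n := by
  obtain ⟨k, hk⟩ := hG g
  obtain ⟨n, -, hn⟩ := (Nat.dvd_prime_pow Nat.prime_two).mp (orderOf_dvd_of_pow_eq_one hk)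
  exact ⟨n, hn⟩

lemma ordpow {a : G} {n k : ℕ} (h : orderOf a = 2 ^ n) (hk : k ≤ n) :
    orderOf (a ^ (2 ^ k : ℕ)) = 2 ^ (n - k) := by
  rw [orderOf_pow' a (pow_ne_zero k two_ne_zero), h,
    Nat.gcd_eq_right (pow_dvd_pow 2 hk), Nat.pow_div hk (by norm_num)]

lemma conjpow (g a : G) (n : ℕ) : g * a ^ n * g⁻¹ = (g * a * g⁻¹) ^ n := by
  induction n with
  | zero => simp
  | succ n ih => rw [pow_succ, pow_succ, ← ih]; group

lemma flipconj {a b : G} (hr : a * b * a⁻¹ = b⁻¹) : a⁻¹ * b * a = b⁻¹ := by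
  have h2 : a⁻¹ * b⁻¹ * a = b := by rw [← hr]; group
  calc a⁻¹ * b * a = (a⁻¹ * b⁻¹ * a)⁻¹ := by group
  _ = b⁻¹ := by rw [h2]

lemma swap1 {a b : G} (hr : a * b * a⁻¹ = b⁻¹) : a * b = b⁻¹ * a := by
  calc a * b = (a * b * a⁻¹) * a := by group
  _ = b⁻¹ * a := by rw [hr]

lemma swap2 {a b : G} (hr : a * b * a⁻¹ = b⁻¹) : b * a = a * b⁻¹ := by
  calc b * a = a * (a⁻¹ * b * a) := by group
  _ = a * b⁻¹ := by rw [flipconj hr]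

lemma conjinvpow {g a : G} (hr : g * a * g⁻¹ = a⁻¹) (n : ℕ) :
    g * a ^ n * g⁻¹ = (a ^ n)⁻¹ := by
  rw [conjpow, hr, inv_pow]

lemma orderOf_conj (g a : G) : orderOf (g * a * g⁻¹) = orderOf a := by
  simpa using orderOf_injective (MulAut.conj g).toMonoidHom (MulEquiv.injective _) a

section Z

variable {z : G} (hz : orderOf z = 2) (huz : ∀ w : G, orderOf w = 2 → w = z)
  (hzc : ∀ g : G, z * g = g * z)

include hz in
lemma zsq : z * z = 1 := by
  have := pow_orderOf_eq_one z; rw [hz, pow_two] at this; exact this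

include hz in
lemma z_ne_one : z ≠ 1 := by
  intro h; rw [h, orderOf_one] at hz; norm_num at hz

include hz in
lemma zinv : z⁻¹ = z := inv_eq_of_mul_eq_one_right (zsq hz)

include huz in
lemma sqone {w : G} (hw : w * w = 1) : w = 1 ∨ w = z := by
  by_cases h1 : w = 1
  · exact Or.inl h1
  · exact Or.inr (huz w (orderOf_eq_prime (by rw [pow_two]; exact hw) h1))

include huz in
lemma ord4sq {x : G} (hx : orderOf x = 4) : x * x = z := by
  have h2 : orderOf (x ^ 2) = 2 := by
    rw [orderOf_pow' x two_ne_zero, hx]; norm_num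
  have := huz _ h2; rwa [pow_two] at this

include hz huz in
lemma ord4inv {x : G} (hx : orderOf x = 4) : x⁻¹ = x * z := by
  refine inv_eq_of_mul_eq_one_right ?_
  calc x * (x * z) = (x * x) * z := by group
  _ = 1 := by rw [ord4sq huz hx, zsq hz]

include hz huz in
lemma ordfour_of_sq_z {w : G} (hw : w * w = z) : orderOf w = 4 := by
  have h4 : w ^ (4:ℕ) = 1 := by
    have h44 : w ^ (4:ℕ) = (w * w) * (w * w) := by
      rw [show (4:ℕ) = 2 + 2 from rfl, pow_add, pow_two]
    rw [h44, hw, zsq hz]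
  have hdvd : orderOf w ∣ 2 ^ 2 := orderOf_dvd_of_pow_eq_one (by norm_num; exact h4)
  obtain ⟨k, hk2, hko⟩ := (Nat.dvd_prime_pow Nat.prime_two).mp hdvd
  interval_cases k
  · have hw1 : w = 1 := orderOf_eq_one_iff.mp (by rw [hko]; rfl)
    rw [hw1] at hw; simp at hw; exact absurd hw.symm (by simpa using z_ne_one hz)
  · have h2 : w * w = 1 := by
      have := pow_orderOf_eq_one w
      rw [hko] at this; norm_num [pow_two] at this; exact this
    rw [h2] at hw; exact absurd hw.symm (z_ne_one hz)
  · rw [hko]; rfl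

include hz huz hzc in
lemma comm4 {x y : G} (hx : orderOf x = 4) (hy : orderOf y = 4)
    (hcomm : x * y = y * x) : y = x ∨ y = x⁻¹ := by
  have hcy : x * y⁻¹ = y⁻¹ * x := (Commute.inv_right hcomm).eq
  have hsq : (x * y⁻¹) * (x * y⁻¹) = 1 := by
    calc (x * y⁻¹) * (x * y⁻¹) = x * (y⁻¹ * x) * y⁻¹ := by group
    _ = x * (x * y⁻¹) * y⁻¹ := by rw [← hcy]
    _ = (x * x) * (y * y)⁻¹ := by group
    _ = z * z⁻¹ := by rw [ord4sq huz hx, ord4sq huz hy]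
    _ = 1 := by simp
  rcases sqone huz hsq with h1 | h1
  · left
    have h2 := mul_eq_one_iff_eq_inv.mp h1
    rw [inv_inv] at h2; exact h2.symm
  · right
    have hy1 : y = z⁻¹ * x := by rw [← h1]; group
    rw [hy1, zinv hz, hzc x, ← ord4inv hz huz hx]

include hz huz hzc in
lemma CLplus (hG : IsPGroup 2 G) {g g' : G} {n : ℕ}
    (hn : orderOf g = 2 ^ n) (h3 : 3 ≤ n) (hsq : g' * g' = g * g) :
    g' = g ∨ g' = g * z := by
  have h1 : g' * g⁻¹ = g'⁻¹ * g := by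
    refine mul_left_cancel (a := g') ?_
    calc g' * (g' * g⁻¹) = (g' * g') * g⁻¹ := by group
    _ = (g * g) * g⁻¹ := by rw [hsq]
    _ = g' * (g'⁻¹ * g) := by group
  have key : g * (g⁻¹ * g') * g⁻¹ = (g⁻¹ * g')⁻¹ := by
    calc g * (g⁻¹ * g') * g⁻¹ = g' * g⁻¹ := by group
    _ = g'⁻¹ * g := h1
    _ = (g⁻¹ * g')⁻¹ := by group
  set δ := g⁻¹ * g' with hδ
  obtain ⟨d, hd⟩ := ord2pow hG δ
  by_cases hdle : d ≤ 1
  · have hdvd : orderOf δ ∣ 2 := by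
      rw [hd]
      calc (2:ℕ) ^ d ∣ 2 ^ 1 := pow_dvd_pow 2 hdle
      _ = 2 := by norm_num
    have hδ2 : δ * δ = 1 := by
      have := orderOf_dvd_iff_pow_eq_one.mp hdvd
      rwa [pow_two] at this
    rcases sqone huz hδ2 with he | he
    · left
      have h2 : g⁻¹ * g' = 1 := he
      calc g' = g * (g⁻¹ * g') := by group
      _ = g := by rw [h2, mul_one]
    · right
      calc g' = g * (g⁻¹ * g') := by group
      _ = g * z := by rw [← hδ, he]
  · push_neg at hdle
    exfalso
    set e := δ ^ (2 ^ (d - 2) : ℕ) with hedef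
    have he4 : orderOf e = 4 := by
      have := ordpow hd (Nat.sub_le d 2)
      rwa [show d - (d - 2) = 2 by omega] at this
    have hg2δ : (g * g) * δ * (g * g)⁻¹ = δ := by
      calc (g * g) * δ * (g * g)⁻¹ = g * (g * δ * g⁻¹) * g⁻¹ := by group
      _ = g * δ⁻¹ * g⁻¹ := by rw [key]
      _ = (g * δ * g⁻¹)⁻¹ := by group
      _ = δ := by rw [key]; group
    have hcomm2 : Commute (g * g) δ := by
      have : (g * g) * δ = δ * (g * g) := by
        calc (g * g) * δ = ((g * g) * δ * (g * g)⁻¹) * (g * g) := by group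
        _ = δ * (g * g) := by rw [hg2δ]
      exact this
    set f := (g * g) ^ (2 ^ (n - 3) : ℕ) with hfdef
    have hgg : orderOf (g * g) = 2 ^ (n - 1) := by
      have := ordpow hn (show 1 ≤ n by omega)
      rwa [pow_one, pow_two] at this
    have hf4 : orderOf f = 4 := by
      have := ordpow hgg (show n - 3 ≤ n - 1 by omega)
      rwa [show n - 1 - (n - 3) = 2 by omega] at this
    have hef : e * f = f * e := (Commute.pow_pow hcomm2.symm _ _).eq
    have hgf : Commute g f := (((Commute.refl g).mul_right (Commute.refl g)).pow_right _)
    have hge : g * e = e * g := by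
      rcases comm4 hz huz hzc he4 hf4 hef with hef1 | hef1
      · rw [← hef1]; exact hgf.eq
      · have h5 : e = f⁻¹ := by rw [hef1, inv_inv]
        rw [h5]; exact hgf.inv_right.eq
    have hinv_e : g * e * g⁻¹ = e⁻¹ := by
      rw [hedef, conjpow, key, inv_pow]
    have hee : e⁻¹ = e := by
      rw [← hinv_e, hge]; group
    have h2 : e * e = 1 := by nth_rewrite 1 [← hee]; exact inv_mul_cancel e
    have : orderOf e ∣ 2 := orderOf_dvd_iff_pow_eq_one.mpr (by rwa [pow_two])
    rw [he4] at this; norm_num at this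

include hz in
lemma zsh2 {a b c : G} (h : a * b = c) : a * (b * z) = c * z := by
  calc a * (b * z) = (a * b) * z := by group
  _ = c * z := by rw [h]

include hz hzc in
lemma zsh1 {a b c : G} (h : a * b = c) : (a * z) * b = c * z := by
  calc (a * z) * b = a * (z * b) := by group
  _ = a * (b * z) := by rw [hzc b]
  _ = c * z := zsh2 hz h

include hz hzc in
lemma zsh12 {a b c : G} (h : a * b = c) : (a * z) * (b * z) = c := by
  calc (a * z) * (b * z) = ((a * z) * b) * z := by group
  _ = (c * z) * z := by rw [zsh1 hz hzc h]
  _ = c * (z * z) := by group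
  _ = c := by rw [zsq hz, mul_one]

lemma ordsq {a : G} {n : ℕ} (h : orderOf a = 2 ^ n) (hn : 1 ≤ n) :
    orderOf (a * a) = 2 ^ (n - 1) := by
  have := ordpow h hn; rwa [pow_one, pow_two] at this

include hz huz hzc in
lemma core (hG : IsPGroup 2 G) {h s : G} (hh : orderOf h = 8) (hs : orderOf s = 8)
    (hrel : (h * h) * s * (h * h)⁻¹ = s⁻¹) : False := by
  have hh3 : orderOf h = 2 ^ 3 := by rw [hh]; norm_num
  have hs3 : orderOf s = 2 ^ 3 := by rw [hs]; norm_num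
  set u := h * h with hudef
  set v := s * s with hvdef
  have hu4 : orderOf u = 4 := by
    have := ordsq hh3 (by norm_num); norm_num at this; exact this
  have hv4 : orderOf v = 4 := by
    have := ordsq hs3 (by norm_num); norm_num at this; exact this
  have huu : u * u = z := ord4sq huz hu4
  have hvv : v * v = z := ord4sq huz hv4
  have huinv : u⁻¹ = u * z := ord4inv hz huz hu4
  have hvinv : v⁻¹ = v * z := ord4inv hz huz hv4
  have hus : u * s * u⁻¹ = s⁻¹ := hrel
  have huv : u * v * u⁻¹ = v⁻¹ := by
    calc u * v * u⁻¹ = u * (s * s) * u⁻¹ := by rw [hvdef]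
    _ = (u * s * u⁻¹) * (u * s * u⁻¹) := by group
    _ = s⁻¹ * s⁻¹ := by rw [hus]
    _ = (s * s)⁻¹ := by group
    _ = v⁻¹ := by rw [← hvdef]
  have hvu : v * u * v⁻¹ = u⁻¹ := by
    calc v * u * v⁻¹ = (v * u) * v⁻¹ := by group
    _ = (u * v⁻¹) * v⁻¹ := by rw [swap2 huv]
    _ = u * (v * v)⁻¹ := by group
    _ = u * z⁻¹ := by rw [hvv]
    _ = u * z := by rw [zinv hz]
    _ = u⁻¹ := (ord4inv hz huz hu4).symm
  have hvne : v⁻¹ ≠ v := by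
    intro hc
    have h9 : v * v = 1 := by nth_rewrite 1 [← hc]; exact inv_mul_cancel v
    rw [hvv] at h9; exact z_ne_one hz h9
  have hvh_ne : v * h ≠ h * v := by
    intro hc
    have hcu : v * u = u * v := by
      calc v * u = v * (h * h) := by rw [hudef]
      _ = (v * h) * h := by group
      _ = (h * v) * h := by rw [hc]
      _ = h * (v * h) := by group
      _ = h * (h * v) := by rw [hc]
      _ = (h * h) * v := by rw [← mul_assoc]
      _ = u * v := by rw [← hudef]
    have h9 : u * v * u⁻¹ = v := by
      calc u * v * u⁻¹ = (u * v) * u⁻¹ := by group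
      _ = (v * u) * u⁻¹ := by rw [← hcu]
      _ = v := by group
    rw [huv] at h9; exact hvne h9
  have hhu : h * u = u * h := by rw [hudef]; group
  have hhuc : h * u * h⁻¹ = u := by
    calc h * u * h⁻¹ = (h * u) * h⁻¹ := by group
    _ = (u * h) * h⁻¹ := by rw [hhu]
    _ = u := by group
  have hinv8 : orderOf h⁻¹ = 2 ^ 3 := by rw [orderOf_inv, hh3]
  have hvhsq : (v * h * v⁻¹) * (v * h * v⁻¹) = h⁻¹ * h⁻¹ := by
    calc (v * h * v⁻¹) * (v * h * v⁻¹) = v * (h * h) * v⁻¹ := by group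
    _ = v * u * v⁻¹ := by rw [← hudef]
    _ = u⁻¹ := hvu
    _ = (h * h)⁻¹ := by rw [hudef]
    _ = h⁻¹ * h⁻¹ := by group
  have hvh : v * h * v⁻¹ = h⁻¹ := by
    rcases CLplus hz huz hzc hG hinv8 (by norm_num) hvhsq with hcase | hcase
    · exact hcase
    · exfalso
      have hsq1 : (v * h) * (v * h) = 1 := by
        calc (v * h) * (v * h) = (v * h * v⁻¹) * ((v * v) * h) := by group
        _ = (h⁻¹ * z) * (z * h) := by rw [hcase, hvv]
        _ = h⁻¹ * (z * z) * h := by group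
        _ = 1 := by rw [zsq hz]; group
      rcases sqone huz hsq1 with h1 | h1
      · have h9 : v = h⁻¹ := by
          calc v = (v * h) * h⁻¹ := by group
          _ = h⁻¹ := by rw [h1]; group
        apply hvh_ne; rw [h9]; group
      · have h9 : v = z * h⁻¹ := by
          calc v = (v * h) * h⁻¹ := by group
          _ = z * h⁻¹ := by rw [h1]
        apply hvh_ne
        rw [h9]
        have h10 : h * (z * h⁻¹) = z := by
          calc h * (z * h⁻¹) = (h * z) * h⁻¹ := by group
          _ = (z * h) * h⁻¹ := by rw [hzc h]
          _ = z := by group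
        rw [h10]
        group
  set w := h * v * h⁻¹ with hwdef
  have hww : w * w = z := by
    calc w * w = h * (v * v) * h⁻¹ := by rw [hwdef]; group
    _ = h * z * h⁻¹ := by rw [hvv]
    _ = z := by rw [← hzc h]; group
  have hwh : w * h * w⁻¹ = h⁻¹ := by
    calc w * h * w⁻¹ = h * (v * h * v⁻¹) * h⁻¹ := by rw [hwdef]; group
    _ = h * h⁻¹ * h⁻¹ := by rw [hvh]
    _ = h⁻¹ := by group
  set δ := v * w⁻¹ with hδdef
  have hδh : δ * h * δ⁻¹ = h := by
    calc δ * h * δ⁻¹ = v * (w⁻¹ * h * w) * v⁻¹ := by rw [hδdef]; group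
    _ = v * h⁻¹ * v⁻¹ := by rw [flipconj hwh]
    _ = (v * h * v⁻¹)⁻¹ := by group
    _ = h := by rw [hvh]; group
  have hδhc : δ * h = h * δ := by
    calc δ * h = (δ * h * δ⁻¹) * δ := by group
    _ = h * δ := by rw [hδh]
  have hwhw : h * w * h⁻¹ = v⁻¹ := by
    calc h * w * h⁻¹ = (h * h) * v * (h * h)⁻¹ := by rw [hwdef]; group
    _ = u * v * u⁻¹ := by rw [← hudef]
    _ = v⁻¹ := huv
  have hE1 : v * w⁻¹ = w * v := by
    have h1 : h * δ * h⁻¹ = w * v := by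
      calc h * δ * h⁻¹ = (h * v * h⁻¹) * (h * w⁻¹ * h⁻¹) := by rw [hδdef]; group
      _ = w * (h * w * h⁻¹)⁻¹ := by rw [← hwdef]; group
      _ = w * (v⁻¹)⁻¹ := by rw [hwhw]
      _ = w * v := by group
    have h2 : h * δ * h⁻¹ = δ := by
      calc h * δ * h⁻¹ = (h * δ) * h⁻¹ := by group
      _ = (δ * h) * h⁻¹ := by rw [← hδhc]
      _ = δ := by group
    have h3 := h2.symm.trans h1
    rw [hδdef] at h3; exact h3
  have hδδ : δ * δ = z := by
    calc δ * δ = (v * w⁻¹) * (v * w⁻¹) := by rw [hδdef]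
    _ = (v * w⁻¹) * (w * v) := by nth_rewrite 2 [hE1]; rfl
    _ = v * v := by group
    _ = z := hvv
  have hδ4 : orderOf δ = 4 := ordfour_of_sq_z hz huz hδδ
  have hδu : δ * u = u * δ := by
    calc δ * u = δ * (h * h) := by rw [hudef]
    _ = (δ * h) * h := by group
    _ = (h * δ) * h := by rw [hδhc]
    _ = h * (δ * h) := by group
    _ = h * (h * δ) := by rw [hδhc]
    _ = (h * h) * δ := by rw [← mul_assoc]
    _ = u * δ := by rw [← hudef]
  have hδcase := comm4 hz huz hzc hu4 hδ4 hδu.symm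
  have hwcase : w = u⁻¹ * v ∨ w = u * v := by
    rcases hδcase with h1 | h1
    · left
      rw [hδdef] at h1
      calc w = (v * w⁻¹)⁻¹ * v := by group
      _ = u⁻¹ * v := by rw [h1]
    · right
      rw [hδdef] at h1
      calc w = (v * w⁻¹)⁻¹ * v := by group
      _ = (u⁻¹)⁻¹ * v := by rw [h1]
      _ = u * v := by group
  have hvinvu : v⁻¹ * u = u * v := by
    calc v⁻¹ * u = (v * z) * u := by rw [hvinv]
    _ = v * (z * u) := by group
    _ = v * (u * z) := by rw [hzc u]
    _ = v * u⁻¹ := by rw [← huinv]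
    _ = u * v := (swap2 hvu).symm
  set t := h * s with htdef
  have hsu : s * u * s⁻¹ = u * v⁻¹ := by
    calc s * u * s⁻¹ = (s * u) * s⁻¹ := by group
    _ = (u * s⁻¹) * s⁻¹ := by rw [swap2 hus]
    _ = u * (s * s)⁻¹ := by group
    _ = u * v⁻¹ := by rw [← hvdef]
  have hconj_u : t * u * t⁻¹ = u * w⁻¹ := by
    calc t * u * t⁻¹ = h * (s * u * s⁻¹) * h⁻¹ := by rw [htdef]; group
    _ = h * (u * v⁻¹) * h⁻¹ := by rw [hsu]
    _ = (h * u * h⁻¹) * (h * v * h⁻¹)⁻¹ := by group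
    _ = u * w⁻¹ := by rw [hhuc, ← hwdef]
  have hRu : t * u * t⁻¹ = v ∨ t * u * t⁻¹ = v * z := by
    rcases hwcase with h1 | h1
    · right
      rw [hconj_u, h1]
      calc u * (u⁻¹ * v)⁻¹ = u * (v⁻¹ * u) := by group
      _ = u * (u * v) := by rw [hvinvu]
      _ = (u * u) * v := by group
      _ = z * v := by rw [huu]
      _ = v * z := hzc v
    · left
      rw [hconj_u, h1]
      calc u * (u * v)⁻¹ = (u * v * u⁻¹)⁻¹ := by group
      _ = (v⁻¹)⁻¹ := by rw [huv]
      _ = v := by group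
  have hRv : t * v * t⁻¹ = (u * v) ∨ t * v * t⁻¹ = (u * v) * z := by
    have hconj_v : t * v * t⁻¹ = w := by
      have hsv : s * v * s⁻¹ = v := by rw [hvdef]; group
      calc t * v * t⁻¹ = h * (s * v * s⁻¹) * h⁻¹ := by rw [htdef]; group
      _ = h * v * h⁻¹ := by rw [hsv]
      _ = w := by rw [← hwdef]
    rcases hwcase with h1 | h1
    · right
      rw [hconj_v, h1, huinv]
      calc (u * z) * v = u * (z * v) := by group
      _ = u * (v * z) := by rw [hzc v]
      _ = (u * v) * z := by group
    · left; rw [hconj_v, h1]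
  have hRuv : t * (u * v) * t⁻¹ = u ∨ t * (u * v) * t⁻¹ = u * z := by
    have hexp : t * (u * v) * t⁻¹ = (t * u * t⁻¹) * (t * v * t⁻¹) := by group
    have hvuv : v * (u * v) = u := by
      calc v * (u * v) = (v * u) * v := by group
      _ = (u * v⁻¹) * v := by rw [swap2 huv]
      _ = u := by group
    rcases hRu with h1 | h1 <;> rcases hRv with h2 | h2
    · left; rw [hexp, h1, h2]; exact hvuv
    · right; rw [hexp, h1, h2]; exact zsh2 hz hvuv
    · right; rw [hexp, h1, h2]; exact zsh1 hz hzc hvuv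
    · left; rw [hexp, h1, h2]; exact zsh12 hz hzc hvuv
  obtain ⟨r, hr⟩ := ord2pow hG t
  have hcyc : ∀ j : ℕ,
      (j % 3 = 0 → (t ^ j * u * (t ^ j)⁻¹ = u ∨ t ^ j * u * (t ^ j)⁻¹ = u * z)) ∧
      (j % 3 = 1 → (t ^ j * u * (t ^ j)⁻¹ = v ∨ t ^ j * u * (t ^ j)⁻¹ = v * z)) ∧
      (j % 3 = 2 → (t ^ j * u * (t ^ j)⁻¹ = u * v ∨ t ^ j * u * (t ^ j)⁻¹ = (u * v) * z)) := by
    intro j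
    induction j with
    | zero =>
      refine ⟨fun _ => Or.inl (by group), fun hc => absurd hc (by norm_num),
        fun hc => absurd hc (by norm_num)⟩
    | succ j ih =>
      obtain ⟨ih0, ih1, ih2⟩ := ih
      have hstep : ∀ a c c' : G, (a = c ∨ a = c * z) →
          (t * c * t⁻¹ = c' ∨ t * c * t⁻¹ = c' * z) →
          (t * a * t⁻¹ = c' ∨ t * a * t⁻¹ = c' * z) := by
        intro a c c' hac hcc
        rcases hac with rfl | rfl
        · exact hcc
        · have hzz : t * (c * z) * t⁻¹ = (t * c * t⁻¹) * z := by
            calc t * (c * z) * t⁻¹ = t * c * (z * t⁻¹) := by group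
            _ = t * c * (t⁻¹ * z) := by rw [hzc t⁻¹]
            _ = (t * c * t⁻¹) * z := by group
          rcases hcc with h2 | h2
          · right; rw [hzz, h2]
          · left
            rw [hzz, h2]
            calc c' * z * z = c' * (z * z) := by group
            _ = c' := by rw [zsq hz, mul_one]
      have hsucc : t ^ (j+1) * u * (t ^ (j+1))⁻¹ = t * (t ^ j * u * (t ^ j)⁻¹) * t⁻¹ := by
        rw [pow_succ']; group
      refine ⟨?_, ?_, ?_⟩
      · intro hj
        have hj2 : j % 3 = 2 := by omega
        rw [hsucc]; exact hstep _ _ _ (ih2 hj2) hRuv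
      · intro hj
        have hj0 : j % 3 = 0 := by omega
        rw [hsucc]; exact hstep _ _ _ (ih0 hj0) hRu
      · intro hj
        have hj1 : j % 3 = 1 := by omega
        rw [hsucc]; exact hstep _ _ _ (ih1 hj1) hRv
  have ht1 : t ^ ((2:ℕ) ^ r) = 1 := by rw [← hr]; exact pow_orderOf_eq_one t
  have hmod : 2 ^ r % 3 = 1 ∨ 2 ^ r % 3 = 2 := by
    have hlt : 2 ^ r % 3 < 3 := Nat.mod_lt _ (by norm_num)
    have h0 : ¬ (2 ^ r % 3 = 0) := by
      intro hc
      have := Nat.Prime.dvd_of_dvd_pow Nat.prime_three (Nat.dvd_of_mod_eq_zero hc)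
      norm_num at this
    omega
  have huv_ne : u * v ≠ v * u := by
    intro hc
    have h5 : v⁻¹ = v := by
      rw [← huv, hc]; group
    exact hvne h5
  obtain ⟨hc0, hc1, hc2⟩ := hcyc (2 ^ r)
  rcases hmod with hm | hm
  · have := hc1 hm
    rw [ht1] at this
    simp only [one_mul, inv_one, mul_one] at this
    rcases this with h5 | h5
    · apply huv_ne; rw [h5]
    · apply huv_ne
      rw [h5]
      calc (v * z) * v = v * (z * v) := by group
      _ = v * (v * z) := by rw [hzc v]
      _ = v * (v * z) := rfl
  · have := hc2 hm
    rw [ht1] at this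
    simp only [one_mul, inv_one, mul_one] at this
    rcases this with h5 | h5
    · have h6 : v = 1 := by
        have := mul_left_cancel (a := u) (show u * v = u * 1 by rw [mul_one, ← h5])
        exact this
      rw [h6] at hvv; simp at hvv; exact z_ne_one hz hvv.symm
    · have h6 : v * z = 1 := by
        have := mul_left_cancel (a := u)
          (show u * (v * z) = u * 1 by rw [mul_one, ← mul_assoc]; exact h5.symm)
        exact this
      have h7 : v = z⁻¹ := by
        calc v = (v * z) * z⁻¹ := by group
        _ = z⁻¹ := by rw [h6, one_mul]
      rw [h7, zinv hz] at hvv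
      rw [zsq hz] at hvv
      exact z_ne_one hz hvv.symm

end Z

end Stmt8Aux
open Stmt8Aux in
/-- In an infinite non-abelian 2-group `G` with a unique element of order 2, if `A` is a
maximal abelian subgroup with more than 4 elements and `b` is an element of order 4 with
`b ∉ A`, then the set of order-4 elements outside `A` equals the left coset `b • A`. -/
theorem stmt_8 (G : Type*) [Group G] [Infinite G] (hG : IsPGroup 2 G)
    (hna : ∃ x y : G, x * y ≠ y * x) (huniq : ∃! x : G, orderOf x = 2)
    (A : Subgroup G) (hA : IsMulCommutative A)
    (hmax : ∀ B : Subgroup G, IsMulCommutative B → A ≤ B → B = A)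
    (hbig : 4 < (A : Set G).encard)
    (b : G) (hb4 : orderOf b = 4) (hbA : b ∉ A) :
    {x : G | orderOf x = 4} \ (A : Set G) = b • (A : Set G) := by
  haveI := hA
  obtain ⟨z, hz, huz⟩ := huniq
  replace huz : ∀ w : G, orderOf w = 2 → w = z := fun w hw => huz w hw
  have hzc : ∀ g : G, z * g = g * z := by
    intro g
    have h1 : orderOf (g * z * g⁻¹) = 2 := by rw [orderOf_conj, hz]
    have h2 := huz _ h1
    calc z * g = (g * z * g⁻¹) * g := by rw [h2]
    _ = g * z := by group
  have hAc : ∀ a ∈ A, ∀ a' ∈ A, a * a' = a' * a := fun a ha a' ha' =>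
    Subgroup.mul_comm_of_mem_isMulCommutative (H := A) ha ha'
  -- A contains an element of order at least 8
  have hex8 : ∃ a ∈ A, ∃ n, 3 ≤ n ∧ orderOf a = 2 ^ n := by
    by_contra hcon
    push_neg at hcon
    have horder : ∀ a ∈ A, orderOf a = 1 ∨ orderOf a = 2 ∨ orderOf a = 4 := by
      intro a ha
      obtain ⟨n, hn⟩ := ord2pow hG a
      have hle : n ≤ 2 := by
        by_contra hle
        exact hcon a ha n (by omega) hn
      interval_cases n
      · left; rw [hn]; rfl
      · right; left; rw [hn]; rfl
      · right; right; rw [hn]; rfl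
    by_cases h4ex : ∃ w ∈ A, orderOf w = 4
    · obtain ⟨w, hwA, hw4⟩ := h4ex
      have hsub : (A : Set G) ⊆ {1, z, w, w⁻¹} := by
        intro a ha
        simp only [Set.mem_insert_iff, Set.mem_singleton_iff]
        rcases horder a ha with h1 | h2 | h4
        · exact Or.inl (orderOf_eq_one_iff.mp h1)
        · exact Or.inr (Or.inl (huz a h2))
        · rcases comm4 hz huz hzc hw4 h4 (hAc w hwA a ha) with haw | haw
          · exact Or.inr (Or.inr (Or.inl haw))
          · exact Or.inr (Or.inr (Or.inr haw))
      have h44 : ({1, z, w, w⁻¹} : Set G).encard ≤ 4 := by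
        refine le_trans (Set.encard_insert_le _ _) ?_
        refine le_trans (add_le_add_left (Set.encard_insert_le _ _) 1) ?_
        refine le_trans (add_le_add_left (add_le_add_left (Set.encard_insert_le _ _) 1) 1) ?_
        rw [Set.encard_singleton]
        norm_num
      exact absurd hbig (not_lt.mpr (le_trans (Set.encard_mono hsub) h44))
    · push_neg at h4ex
      have hsub : (A : Set G) ⊆ {1, z} := by
        intro a ha
        simp only [Set.mem_insert_iff, Set.mem_singleton_iff]
        rcases horder a ha with h1 | h2 | h4
        · exact Or.inl (orderOf_eq_one_iff.mp h1)
        · exact Or.inr (huz a h2)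
        · exact absurd h4 (h4ex a ha)
      have h22 : ({1, z} : Set G).encard ≤ 4 := by
        refine le_trans (Set.encard_insert_le _ _) ?_
        rw [Set.encard_singleton]
        norm_num
      exact absurd hbig (not_lt.mpr (le_trans (Set.encard_mono hsub) h22))
  obtain ⟨a0, ha0, k, hk3, hka⟩ := hex8
  set h := a0 ^ (2 ^ (k - 3) : ℕ) with hhdef
  have hhA : h ∈ A := pow_mem ha0 _
  have hh8 : orderOf h = 8 := by
    have := ordpow hka (Nat.sub_le k 3)
    rw [show k - (k - 3) = 3 by omega] at this
    norm_num at this; exact this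
  set u := h * h with hudef
  have huA : u ∈ A := mul_mem hhA hhA
  have hu4 : orderOf u = 4 := by
    have := ordsq (show orderOf h = 2 ^ 3 by rw [hh8]; norm_num) (by norm_num)
    norm_num at this; exact this
  have huu : u * u = z := ord4sq huz hu4
  have hzA : z ∈ A := by rw [← huu]; exact mul_mem huA huA
  -- every order-4 element outside A inverts u
  have inv_u : ∀ x : G, orderOf x = 4 → x ∉ A → x * u * x⁻¹ = u⁻¹ := by
    intro x hx4 hxA
    have hxu_ne : x * u ≠ u * x := by
      intro hc
      rcases comm4 hz huz hzc hu4 hx4 hc.symm with h1 | h1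
      · exact hxA (h1 ▸ huA)
      · exact hxA (h1 ▸ inv_mem huA)
    set s := u⁻¹ * x with hsdef
    have hxinv : x⁻¹ = x * z := ord4inv hz huz hx4
    have huinv : u⁻¹ = u * z := ord4inv hz huz hu4
    have hconj : u * s * u⁻¹ = s⁻¹ := by
      calc u * s * u⁻¹ = x * u⁻¹ := by rw [hsdef]; group
      _ = x * (u * z) := by rw [huinv]
      _ = x * (z * u) := by rw [hzc u]
      _ = (x * z) * u := by group
      _ = x⁻¹ * u := by rw [← hxinv]
      _ = s⁻¹ := by rw [hsdef]; group
    obtain ⟨m, hm⟩ := ord2pow hG s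
    rcases lt_or_ge m 3 with hmlt | hmge
    · interval_cases m
      · exfalso
        have hs1 : s = 1 := orderOf_eq_one_iff.mp (by rw [hm]; rfl)
        have hxu : x = u := by
          calc x = u * (u⁻¹ * x) := by group
          _ = u := by rw [← hsdef, hs1, mul_one]
        exact hxA (hxu ▸ huA)
      · exfalso
        have hs2 : s = z := huz s (by rw [hm]; rfl)
        have hxu : x = u * z := by
          calc x = u * (u⁻¹ * x) := by group
          _ = u * z := by rw [← hsdef, hs2]
        exact hxA (hxu ▸ mul_mem huA hzA)
      · have hss : s * s = z := ord4sq huz (by rw [hm]; rfl)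
        have hxus : x = u * s := by rw [hsdef]; group
        calc x * u * x⁻¹ = (u * s) * u * ((u * s))⁻¹ := by rw [← hxus]
        _ = u * (s * u) * s⁻¹ * u⁻¹ := by group
        _ = u * (u * s⁻¹) * s⁻¹ * u⁻¹ := by rw [swap2 hconj]
        _ = (u * u) * (s * s)⁻¹ * u⁻¹ := by group
        _ = z * z⁻¹ * u⁻¹ := by rw [huu, hss]
        _ = u⁻¹ := by simp
    · exfalso
      set s1 := s ^ (2 ^ (m - 3) : ℕ) with hs1def
      have hs18 : orderOf s1 = 8 := by
        have := ordpow hm (Nat.sub_le m 3)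
        rw [show m - (m - 3) = 3 by omega] at this
        norm_num at this; exact this
      have hrel : (h * h) * s1 * (h * h)⁻¹ = s1⁻¹ := by
        rw [← hudef, hs1def, conjinvpow hconj]
      exact core hz huz hzc hG hh8 hs18 hrel
  -- every order-4 element outside A inverts all of A
  have inv_A : ∀ x : G, orderOf x = 4 → x ∉ A → ∀ a ∈ A, x * a * x⁻¹ = a⁻¹ := by
    intro x hx4 hxA
    have hxx : x * x = z := ord4sq huz hx4
    have key : ∀ n : ℕ, ∀ a ∈ A, orderOf a = 2 ^ n → x * a * x⁻¹ = a⁻¹ := by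
      intro n
      induction n using Nat.strong_induction_on with
      | _ n IH =>
        intro a haA han
        rcases Nat.lt_or_ge n 3 with hn3 | hn3
        · interval_cases n
          · have ha1 : a = 1 := orderOf_eq_one_iff.mp (by rw [han]; rfl)
            rw [ha1]; simp
          · have haz : a = z := huz a (by rw [han]; rfl)
            rw [haz]
            calc x * z * x⁻¹ = (x * z) * x⁻¹ := by group
            _ = (z * x) * x⁻¹ := by rw [hzc x]
            _ = z := by group
            _ = z⁻¹ := (zinv hz).symm
          · rcases comm4 hz huz hzc hu4 (by rw [han]; rfl) (hAc u huA a haA) with h1 | h1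
            · rw [h1]; exact inv_u x hx4 hxA
            · rw [h1]
              calc x * u⁻¹ * x⁻¹ = (x * u * x⁻¹)⁻¹ := by group
              _ = (u⁻¹)⁻¹ := by rw [inv_u x hx4 hxA]
        · have haa : a * a ∈ A := mul_mem haA haA
          have hanm : orderOf (a * a) = 2 ^ (n - 1) := ordsq han (by omega)
          have hIH := IH (n - 1) (by omega) (a * a) haa hanm
          have hsq : (x * a * x⁻¹) * (x * a * x⁻¹) = a⁻¹ * a⁻¹ := by
            calc (x * a * x⁻¹) * (x * a * x⁻¹) = x * (a * a) * x⁻¹ := by group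
            _ = (a * a)⁻¹ := hIH
            _ = a⁻¹ * a⁻¹ := by group
          have hord : orderOf a⁻¹ = 2 ^ n := by rw [orderOf_inv, han]
          rcases CLplus hz huz hzc hG hord hn3 hsq with h1 | h1
          · exact h1
          · exfalso
            have hxa : (x * a) * (x * a) = 1 := by
              calc (x * a) * (x * a) = (x * a * x⁻¹) * ((x * x) * a) := by group
              _ = (a⁻¹ * z) * (z * a) := by rw [h1, hxx]
              _ = a⁻¹ * (z * z) * a := by group
              _ = 1 := by rw [zsq hz]; group
            rcases sqone huz hxa with h2 | h2
            · have hxe : x = a⁻¹ := by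
                calc x = (x * a) * a⁻¹ := by group
                _ = a⁻¹ := by rw [h2, one_mul]
              exact hxA (hxe ▸ inv_mem haA)
            · have hxe : x = z * a⁻¹ := by
                calc x = (x * a) * a⁻¹ := by group
                _ = z * a⁻¹ := by rw [h2]
              exact hxA (hxe ▸ mul_mem hzA (inv_mem haA))
    intro a haA
    obtain ⟨n, hn⟩ := ord2pow hG a
    exact key n a haA hn
  -- the set equality
  ext g
  simp only [Set.mem_diff, Set.mem_setOf_eq, SetLike.mem_coe]
  constructor
  · rintro ⟨hg4, hgA⟩
    set y := b⁻¹ * g with hydef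
    have hy_comm : ∀ a ∈ A, y * a = a * y := by
      intro a haA
      have h2 : b⁻¹ * a * b = a⁻¹ := flipconj (inv_A b hb4 hbA a haA)
      have h3 : b⁻¹ * a⁻¹ * b = a := by
        calc b⁻¹ * a⁻¹ * b = (b⁻¹ * a * b)⁻¹ := by group
        _ = a := by rw [h2, inv_inv]
      have h1 : y * a * y⁻¹ = a := by
        calc y * a * y⁻¹ = b⁻¹ * (g * a * g⁻¹) * b := by rw [hydef]; group
        _ = b⁻¹ * a⁻¹ * b := by rw [inv_A g hg4 hgA a haA]
        _ = a := h3
      calc y * a = (y * a * y⁻¹) * y := by group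
      _ = a * y := by rw [h1]
    have hyA : y ∈ A := by
      have hy_comm' : ∀ p ∈ ((A : Set G) ∪ {y}), ∀ q ∈ ((A : Set G) ∪ {y}),
          p * q = q * p := by
        rintro p (hp | hp) q (hq | hq)
        · exact hAc p hp q hq
        · rw [Set.mem_singleton_iff] at hq; rw [hq]; exact (hy_comm p hp).symm
        · rw [Set.mem_singleton_iff] at hp; rw [hp]; exact hy_comm q hq
        · rw [Set.mem_singleton_iff] at hp hq; rw [hp, hq]
      have hcent : ∀ q ∈ Subgroup.closure ((A : Set G) ∪ {y}),
          ∀ p ∈ Subgroup.closure ((A : Set G) ∪ {y}), p * q = q * p := by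
        intro q hq
        have hq1 : q ∈ Subgroup.centralizer ((A : Set G) ∪ {y}) :=
          (Subgroup.closure_le _).mpr
            (fun p hp => Subgroup.mem_centralizer_iff.mpr
              (fun r hr => hy_comm' r hr p hp)) hq
        intro p hp
        have hp1 : p ∈ Subgroup.centralizer {q} :=
          (Subgroup.closure_le _).mpr
            (fun r hr => Subgroup.mem_centralizer_iff.mpr (by
              rintro w hw
              rw [Set.mem_singleton_iff] at hw
              subst hw
              exact (Subgroup.mem_centralizer_iff.mp hq1 r hr).symm)) hp
        exact (Subgroup.mem_centralizer_iff.mp hp1 q (Set.mem_singleton q)).symm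
      have hBcomm : IsMulCommutative (Subgroup.closure ((A : Set G) ∪ {y})) :=
        ⟨⟨fun p q => Subtype.ext (hcent q.1 q.2 p.1 p.2)⟩⟩
      have hle : A ≤ Subgroup.closure ((A : Set G) ∪ {y}) :=
        fun a ha => Subgroup.subset_closure (Or.inl ha)
      have heq := hmax _ hBcomm hle
      rw [← heq]
      exact Subgroup.subset_closure (Or.inr rfl)
    rw [Set.mem_smul_set]
    exact ⟨y, hyA, by rw [smul_eq_mul, hydef]; group⟩
  · intro hg
    rw [Set.mem_smul_set] at hg
    obtain ⟨a, haA, hba⟩ := hg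
    rw [smul_eq_mul] at hba
    subst hba
    constructor
    · have hbb : b * b = z := ord4sq huz hb4
      have hsq : (b * a) * (b * a) = z := by
        calc (b * a) * (b * a) = (b * a * b⁻¹) * ((b * b) * a) := by group
        _ = a⁻¹ * (z * a) := by rw [inv_A b hb4 hbA a haA, hbb]
        _ = a⁻¹ * (a * z) := by rw [hzc a]
        _ = z := by group
      exact ordfour_of_sq_z hz huz hsq
    · intro hc
      refine hbA ?_
      have hbe : b = (b * a) * a⁻¹ := by group
      rw [hbe]; exact mul_mem hc (inv_mem haA)
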